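/- Let d ≥ 1 be an integer, α ∈ (0,2), and 0 < c₁ ≤ c₂. Suppose p : (0,∞) × ℝ^d × ℝ^d → ℝ is measurable in its last variable and satisfies c₁·min(t^(−d/α), t/|x−y|^(d+α)) ≤ p(t,x,y) ≤ c₂·min(t^(−d/α), t/|x−y|^(d+α)) for all t > 0, x, y ∈ ℝ^d. Let κ be any Markov kernel from ℝ^d to ℝ^d, and for t > 0 define Q_t g(x) = ∫_{ℝ^d} g(z)·p(t,x,z) dz for bounded measurable g, and P_t f(x) = Q_t(κ f)(x), where (κ f)(z) = ∫ f dκ(z). Then there is a constant C > 0 (depending only on d, α, c₁, c₂) such that for all t > 0, x, y ∈ ℝ^d and all bounded measurable f : ℝ^d → [0,∞), P_t f(x) ≤ C·(1 + |x−y|/t^(1/α))^(d+α) · P_t f(y). -/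

import Mathlib

open Real MeasureTheory ProbabilityTheory

theorem harnack_transfers_through_kernel
    (d : ℕ) (hd : 1 ≤ d) (α : ℝ) (hα : α ∈ Set.Ioo (0 : ℝ) 2)
    (c₁ c₂ : ℝ) (hc₁ : 0 < c₁) (hc₁₂ : c₁ ≤ c₂)
    (p : ℝ → EuclideanSpace ℝ (Fin d) → EuclideanSpace ℝ (Fin d) → ℝ)
    (hmeas : ∀ t x, Measurable (p t x))
    (hlow : ∀ t > (0 : ℝ), ∀ x y,
      c₁ * min (t ^ (-(d : ℝ) / α)) (t / ‖x - y‖ ^ ((d : ℝ) + α)) ≤ p t x y)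
    (hup : ∀ t > (0 : ℝ), ∀ x y,
      p t x y ≤ c₂ * min (t ^ (-(d : ℝ) / α)) (t / ‖x - y‖ ^ ((d : ℝ) + α)))
    (κ : Kernel (EuclideanSpace ℝ (Fin d)) (EuclideanSpace ℝ (Fin d)))
    [IsMarkovKernel κ] :
    ∃ C > (0 : ℝ), ∀ t > (0 : ℝ), ∀ x y : EuclideanSpace ℝ (Fin d),
      ∀ f : EuclideanSpace ℝ (Fin d) → ℝ, Measurable f → (∀ z, 0 ≤ f z) →
      (∃ M, ∀ z, f z ≤ M) →
      ∫ z, (∫ w, f w ∂(κ z)) * p t x z ≤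
        C * (1 + ‖x - y‖ / t ^ (1 / α)) ^ ((d : ℝ) + α) *
          ∫ z, (∫ w, f w ∂(κ z)) * p t y z := by
  obtain ⟨hα0, hα2⟩ := hα
  haveI : Nonempty (Fin d) := ⟨⟨0, hd⟩⟩
  set β : ℝ := (d : ℝ) + α with hβdef
  have hβ0 : 0 < β := by positivity
  have hdβ : (d : ℝ) < β := lt_add_of_pos_right _ hα0
  have hc₂ : 0 < c₂ := lt_of_lt_of_le hc₁ hc₁₂
  refine ⟨c₂ / c₁ * 2 ^ β, by positivity, ?_⟩
  intro t ht x y f hf hf0 hfb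
  set s : ℝ := t ^ (1 / α) with hsdef
  have hs0 : 0 < s := Real.rpow_pos_of_pos ht _
  have hid : t ^ (-(d : ℝ) / α) = t / s ^ β := by
    rw [hsdef, ← Real.rpow_mul ht.le, eq_div_iff (Real.rpow_pos_of_pos ht _).ne',
      ← Real.rpow_add ht, show -(d : ℝ) / α + 1 / α * β = 1 by
        rw [hβdef]; field_simp; ring, Real.rpow_one]
  -- min comparison with t / (max s r) ^ β
  have hmin_le : ∀ r : ℝ, 0 ≤ r →
      min (t ^ (-(d : ℝ) / α)) (t / r ^ β) ≤ t / max s r ^ β := by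
    intro r hr
    rcases eq_or_lt_of_le hr with h0 | h0
    · refine le_trans (min_le_right _ _) ?_
      rw [← h0, Real.zero_rpow hβ0.ne', div_zero]
      positivity
    · have hmaxβ : max s r ^ β = max (s ^ β) (r ^ β) := by
        rcases le_total s r with h | h
        · rw [max_eq_right h, max_eq_right (Real.rpow_le_rpow hs0.le h hβ0.le)]
        · rw [max_eq_left h, max_eq_left (Real.rpow_le_rpow h0.le h hβ0.le)]
      rw [hmaxβ, hid]
      rcases le_total (s ^ β) (r ^ β) with h | h
      · rw [max_eq_right h]; exact min_le_right _ _
      · rw [max_eq_left h]; exact min_le_left _ _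
  have hle_min : ∀ r : ℝ, 0 < r →
      t / (s + r) ^ β ≤ min (t ^ (-(d : ℝ) / α)) (t / r ^ β) := by
    intro r hr
    refine le_min ?_ ?_
    · rw [hid]
      gcongr
      linarith
    · gcongr
      linarith
  have hsum_le : ∀ r : ℝ, 0 ≤ r → s + r ≤ 2 * max s r := by
    intro r hr
    rcases le_total s r with h | h
    · rw [max_eq_right h]; linarith
    · rw [max_eq_left h]; linarith
  have hmax_ge : ∀ r : ℝ, 0 ≤ r → t / max s r ^ β ≤ 2 ^ β * (t / (s + r) ^ β) := by
    intro r hr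
    have hmaxpos : 0 < max s r := lt_max_of_lt_left hs0
    have h2 : (s + r) ^ β ≤ 2 ^ β * max s r ^ β := by
      calc (s + r) ^ β ≤ (2 * max s r) ^ β :=
            Real.rpow_le_rpow (by positivity) (hsum_le r hr) hβ0.le
        _ = 2 ^ β * max s r ^ β := Real.mul_rpow (by norm_num) hmaxpos.le
    calc t / max s r ^ β ≤ t / ((s + r) ^ β / 2 ^ β) := by
          gcongr
          rw [div_le_iff₀ (by positivity)]
          linarith [h2]
      _ = 2 ^ β * (t / (s + r) ^ β) := by
          rw [div_div_eq_mul_div]; ring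
  have htri : ∀ z : EuclideanSpace ℝ (Fin d),
      t / (s + ‖x - z‖) ^ β ≤ (1 + ‖x - y‖ / s) ^ β * (t / (s + ‖y - z‖) ^ β) := by
    intro z
    have htr : ‖y - z‖ ≤ ‖x - y‖ + ‖x - z‖ := by
      calc ‖y - z‖ = ‖(y - x) + (x - z)‖ := by congr 1; abel
        _ ≤ ‖y - x‖ + ‖x - z‖ := norm_add_le _ _
        _ = ‖x - y‖ + ‖x - z‖ := by rw [norm_sub_rev]
    have h1 : s + ‖y - z‖ ≤ (1 + ‖x - y‖ / s) * (s + ‖x - z‖) := by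
      have hnn : 0 ≤ ‖x - y‖ * ‖x - z‖ / s := by positivity
      have hexp : (1 + ‖x - y‖ / s) * (s + ‖x - z‖)
          = s + ‖x - z‖ + ‖x - y‖ + ‖x - y‖ * ‖x - z‖ / s := by
        field_simp
        ring
      rw [hexp]; linarith
    have h2 : (s + ‖y - z‖) ^ β ≤ (1 + ‖x - y‖ / s) ^ β * (s + ‖x - z‖) ^ β := by
      rw [← Real.mul_rpow (by positivity) (by positivity)]
      exact Real.rpow_le_rpow (by positivity) h1 hβ0.le
    have hcpos : (0 : ℝ) < (1 + ‖x - y‖ / s) ^ β := by positivity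
    calc t / (s + ‖x - z‖) ^ β
        ≤ t / ((s + ‖y - z‖) ^ β / (1 + ‖x - y‖ / s) ^ β) := by
          gcongr
          rw [div_le_iff₀ hcpos]
          linarith [h2]
      _ = (1 + ‖x - y‖ / s) ^ β * (t / (s + ‖y - z‖) ^ β) := by
          rw [div_div_eq_mul_div]; ring
  have hminnn : ∀ u v : EuclideanSpace ℝ (Fin d),
      0 ≤ min (t ^ (-(d : ℝ) / α)) (t / ‖u - v‖ ^ β) :=
    fun u v => le_min (Real.rpow_nonneg ht.le _)
      (div_nonneg ht.le (Real.rpow_nonneg (norm_nonneg _) _))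
  have hpnn : ∀ u z, 0 ≤ p t u z := fun u z =>
    le_trans (mul_nonneg hc₁.le (hminnn u z)) (hlow t ht u z)
  set K : ℝ := c₂ / c₁ * 2 ^ β * (1 + ‖x - y‖ / s) ^ β with hK
  have hK0 : 0 < K := by positivity
  -- pointwise Harnack for the heat kernel, off the point y
  have hpoint : ∀ z, z ≠ y → p t x z ≤ K * p t y z := by
    intro z hz
    have hry : 0 < ‖y - z‖ := by
      rw [norm_sub_pos_iff]; exact Ne.symm hz
    have hstep : min (t ^ (-(d : ℝ) / α)) (t / ‖y - z‖ ^ β) ≤ p t y z / c₁ := by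
      rw [le_div_iff₀ hc₁]
      calc min (t ^ (-(d : ℝ) / α)) (t / ‖y - z‖ ^ β) * c₁
          = c₁ * min (t ^ (-(d : ℝ) / α)) (t / ‖y - z‖ ^ β) := by ring
        _ ≤ p t y z := hlow t ht y z
    calc p t x z ≤ c₂ * min (t ^ (-(d : ℝ) / α)) (t / ‖x - z‖ ^ β) := hup t ht x z
      _ ≤ c₂ * (t / max s ‖x - z‖ ^ β) := by
          exact mul_le_mul_of_nonneg_left (hmin_le _ (norm_nonneg _)) hc₂.le
      _ ≤ c₂ * (2 ^ β * (t / (s + ‖x - z‖) ^ β)) :=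
          mul_le_mul_of_nonneg_left (hmax_ge _ (norm_nonneg _)) hc₂.le
      _ ≤ c₂ * (2 ^ β * ((1 + ‖x - y‖ / s) ^ β * (t / (s + ‖y - z‖) ^ β))) := by
          refine mul_le_mul_of_nonneg_left ?_ hc₂.le
          exact mul_le_mul_of_nonneg_left (htri z) (by positivity)
      _ ≤ c₂ * (2 ^ β * ((1 + ‖x - y‖ / s) ^ β *
            min (t ^ (-(d : ℝ) / α)) (t / ‖y - z‖ ^ β))) := by
          refine mul_le_mul_of_nonneg_left ?_ hc₂.le
          refine mul_le_mul_of_nonneg_left ?_ (by positivity)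
          exact mul_le_mul_of_nonneg_left (hle_min _ hry) (by positivity)
      _ ≤ c₂ * (2 ^ β * ((1 + ‖x - y‖ / s) ^ β * (p t y z / c₁))) := by
          refine mul_le_mul_of_nonneg_left ?_ hc₂.le
          refine mul_le_mul_of_nonneg_left ?_ (by positivity)
          exact mul_le_mul_of_nonneg_left hstep (by positivity)
      _ = K * p t y z := by
          rw [hK]; field_simp
  -- properties of h z = ∫ f ∂ κ z
  obtain ⟨M, hM⟩ := hfb
  set M0 : ℝ := max M 0 with hM0
  have hhmeas : Measurable fun z => ∫ w, f w ∂(κ z) := by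
    have hsm : StronglyMeasurable fun q : EuclideanSpace ℝ (Fin d) × EuclideanSpace ℝ (Fin d) =>
        f q.2 := (hf.comp measurable_snd).stronglyMeasurable
    exact hsm.integral_kernel_prod_right'.measurable
  have hh0 : ∀ z, 0 ≤ ∫ w, f w ∂(κ z) := fun z => integral_nonneg hf0
  have hfint : ∀ z, Integrable f (κ z) := fun z =>
    (integrable_const M0).mono' hf.aestronglyMeasurable (ae_of_all _ fun w => by
      rw [Real.norm_eq_abs, abs_of_nonneg (hf0 w)]
      exact le_max_of_le_left (hM w))
  have hhM : ∀ z, (∫ w, f w ∂(κ z)) ≤ M0 := fun z => by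
    calc (∫ w, f w ∂(κ z)) ≤ ∫ _, M0 ∂(κ z) :=
          integral_mono (hfint z) (integrable_const _) fun w => le_max_of_le_left (hM w)
      _ = M0 := by simp
  -- integrability of the dominating function
  have hD : Integrable fun z : EuclideanSpace ℝ (Fin d) => (1 + ‖z - y‖) ^ (-β) := by
    have h1 : Integrable fun z : EuclideanSpace ℝ (Fin d) => (1 + ‖z‖) ^ (-β) :=
      integrable_one_add_norm (by rwa [finrank_euclideanSpace_fin])
    exact h1.comp_sub_right y
  set m : ℝ := min s 1 / 2 with hm
  have hm0 : 0 < m := by positivity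
  have hpbound : ∀ z, p t y z ≤ c₂ * t / m ^ β * (1 + ‖z - y‖) ^ (-β) := by
    intro z
    have hr := norm_nonneg (y - z)
    have h1 : m * (1 + ‖y - z‖) ≤ max s ‖y - z‖ := by
      have h2 : min s 1 * ‖y - z‖ ≤ ‖y - z‖ :=
        mul_le_of_le_one_left hr (min_le_right s 1)
      have h3 := hsum_le ‖y - z‖ hr
      have h4 := min_le_left s 1
      rw [hm]; nlinarith
    have h2 : (m * (1 + ‖y - z‖)) ^ β ≤ max s ‖y - z‖ ^ β :=
      Real.rpow_le_rpow (by positivity) h1 hβ0.le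
    calc p t y z ≤ c₂ * min (t ^ (-(d : ℝ) / α)) (t / ‖y - z‖ ^ β) := hup t ht y z
      _ ≤ c₂ * (t / max s ‖y - z‖ ^ β) :=
          mul_le_mul_of_nonneg_left (hmin_le _ hr) hc₂.le
      _ ≤ c₂ * (t / (m * (1 + ‖y - z‖)) ^ β) := by
          gcongr
      _ = c₂ * t / m ^ β * (1 + ‖z - y‖) ^ (-β) := by
          rw [Real.mul_rpow hm0.le (by positivity), Real.rpow_neg (by positivity),
            norm_sub_rev z y]
          field_simp
  have hint_y : Integrable fun z => (∫ w, f w ∂(κ z)) * p t y z := by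
    refine (hD.const_mul (M0 * (c₂ * t / m ^ β))).mono'
      ((hhmeas.mul (hmeas t y)).aestronglyMeasurable) (ae_of_all _ fun z => ?_)
    rw [Real.norm_eq_abs, abs_of_nonneg (mul_nonneg (hh0 z) (hpnn y z))]
    calc (∫ w, f w ∂(κ z)) * p t y z
        ≤ M0 * (c₂ * t / m ^ β * (1 + ‖z - y‖) ^ (-β)) :=
          mul_le_mul (hhM z) (hpbound z) (hpnn y z) (le_max_right M 0)
      _ = M0 * (c₂ * t / m ^ β) * (1 + ‖z - y‖) ^ (-β) := by ring
  -- a.e. pointwise bound and conclusion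
  haveI : Nontrivial (EuclideanSpace ℝ (Fin d)) := by
    refine ⟨0, EuclideanSpace.single ⟨0, hd⟩ 1, fun h => ?_⟩
    have := congrArg (fun v : EuclideanSpace ℝ (Fin d) => v ⟨0, hd⟩) h.symm
    simp [EuclideanSpace.single] at this
  have hzy : ∀ᵐ z : EuclideanSpace ℝ (Fin d), z ≠ y := by
    rw [ae_iff]
    convert measure_singleton y using 2
    · ext z; simp
    · infer_instance
  have hfinal : ∫ z, (∫ w, f w ∂(κ z)) * p t x z ≤
      ∫ z, K * ((∫ w, f w ∂(κ z)) * p t y z) := by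
    refine integral_mono_of_nonneg
      (ae_of_all _ fun z => mul_nonneg (hh0 z) (hpnn x z)) (hint_y.const_mul K) ?_
    filter_upwards [hzy] with z hz
    calc (∫ w, f w ∂(κ z)) * p t x z ≤ (∫ w, f w ∂(κ z)) * (K * p t y z) :=
          mul_le_mul_of_nonneg_left (hpoint z hz) (hh0 z)
      _ = K * ((∫ w, f w ∂(κ z)) * p t y z) := by ring
  rw [integral_const_mul] at hfinal
  calc ∫ z, (∫ w, f w ∂(κ z)) * p t x z
      ≤ K * ∫ z, (∫ w, f w ∂(κ z)) * p t y z := hfinal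
    _ = c₂ / c₁ * 2 ^ β * (1 + ‖x - y‖ / s) ^ β *
        ∫ z, (∫ w, f w ∂(κ z)) * p t y z := by rw [hK]
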